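/- Let (β,α) ∈ Δ. If Ω_{β,α} is a subshift of finite type, then T_{β,α} has matching. -/

import Mathlib

noncomputable section

/-- The upper intermediate β-transformation `T⁺_{β,α}` on `[0,1]`. -/
def Tpos (β α : ℝ) (x : ℝ) : ℝ :=
  if x = (1 - α) / β then 0 else Int.fract (β * x + α)

/-- The lower intermediate β-transformation `T⁻_{β,α}` on `[0,1]`. -/
def Tneg (β α : ℝ) (x : ℝ) : ℝ :=
  if x = (1 - α) / β then 1 else Int.fract (β * x + α)

/-- The itinerary `τ⁺_{β,α}(x)`: index `n` (from 0) is the `(n+1)`-st entry;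
entry is `false` (i.e. 0) iff the `n`-th iterate is `< c`. -/
def tauPos (β α x : ℝ) : ℕ → Bool :=
  fun n => if (Tpos β α)^[n] x < (1 - α) / β then false else true

/-- The itinerary `τ⁻_{β,α}(x)`: entry is `false` (i.e. 0) iff the iterate is `≤ c`. -/
def tauNeg (β α x : ℝ) : ℕ → Bool :=
  fun n => if (Tneg β α)^[n] x ≤ (1 - α) / β then false else true

/-- The kneading invariant `k₊` of `(β,α)`. -/
def kPlus (β α : ℝ) : ℕ → Bool := tauPos β α ((1 - α) / β)

/-- The kneading invariant `k₋` of `(β,α)`. -/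
def kMinus (β α : ℝ) : ℕ → Bool := tauNeg β α ((1 - α) / β)

/-- The kneading space `Ω_{β,α}`. -/
def OmegaSet (β α : ℝ) : Set (ℕ → Bool) :=
  (tauPos β α '' Set.Icc 0 1) ∪ (tauNeg β α '' Set.Icc 0 1)

/-- `Ω` is a subshift of finite type: there is a finite set of finite forbidden words
such that `Ω` is exactly the set of sequences avoiding them. -/
def IsSFT (Ω : Set (ℕ → Bool)) : Prop :=
  ∃ F : Finset (List Bool),
    Ω = {ω | ∀ m n : ℕ, List.ofFn (fun i : Fin n => ω (m + i)) ∉ F}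

/-- `T_{β,α}` has matching. -/
def HasMatching (β α : ℝ) : Prop :=
  ∃ n : ℕ, (Tpos β α)^[n] 0 = (Tneg β α)^[n] 1

/-- The matching time: the smallest `n` with `(T⁺)ⁿ(0) = (T⁻)ⁿ(1)`. -/
def matchingTime (β α : ℝ) : ℕ :=
  sInf {n : ℕ | (Tpos β α)^[n] 0 = (Tneg β α)^[n] 1}

/-- `T_{β,α}` and `T_{β,α'}` have the same matching: both have matching, with the same
matching time `n`, and their kneading invariants agree in the first `n+1` entries. -/
def SameMatching (β α α' : ℝ) : Prop :=
  HasMatching β α ∧ HasMatching β α' ∧ matchingTime β α = matchingTime β α' ∧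
    ∀ i ≤ matchingTime β α, kPlus β α i = kPlus β α' i ∧ kMinus β α i = kMinus β α' i

/-- The matching set `I(β,α)` (a subset of `(0, 2-β)`). -/
def matchInterval (β α : ℝ) : Set ℝ :=
  {α' | α' ∈ Set.Ioo (0 : ℝ) (2 - β) ∧ SameMatching β α α'}

/-- The parameter region `Δ`. -/
def DeltaSet : Set (ℝ × ℝ) :=
  {p | p.1 ∈ Set.Ioo (1 : ℝ) 2 ∧ p.2 ∈ Set.Ioo (0 : ℝ) (2 - p.1)}

/-- A sequence in `{0,1}^ℕ` is periodic. -/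
def IsPeriodicSeq (ω : ℕ → Bool) : Prop :=
  ∃ p : ℕ, 1 ≤ p ∧ ∀ n, ω (n + p) = ω n

/-- A sequence in `{0,1}^ℕ` is eventually periodic. -/
def IsEvPeriodicSeq (ω : ℕ → Bool) : Prop :=
  ∃ k : ℕ, IsPeriodicSeq (fun n => ω (n + k))

/-- Strict lexicographic order on `{0,1}^ℕ`: at the first index where they differ,
`ω` has entry 0 and `ν` has entry 1. -/
def lexLt (ω ν : ℕ → Bool) : Prop :=
  ∃ n : ℕ, (∀ m < n, ω m = ν m) ∧ ω n = false ∧ ν n = true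


namespace SFTAux

variable {β α x : ℝ}

lemma bpos (hβ1 : 1 < β) : (0:ℝ) < β := lt_trans one_pos hβ1

lemma c_pos (hβ1 : 1 < β) (hβ2 : β < 2) (hα1 : α < 2 - β) : 0 < (1 - α) / β :=
  div_pos (by linarith) (bpos hβ1)

lemma c_lt_one (hβ1 : 1 < β) (hα0 : 0 < α) : (1 - α) / β < 1 := by
  rw [div_lt_one (bpos hβ1)]; linarith

lemma Tpos_low (hβ1 : 1 < β) (hα0 : 0 < α) (hx0 : 0 ≤ x) (hxc : x < (1 - α) / β) :
    Tpos β α x = β * x + α := by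
  have hb := bpos hβ1
  have h1 : β * x < 1 - α := by
    have := (lt_div_iff₀ hb).mp hxc
    linarith [this]
  rw [Tpos, if_neg (ne_of_lt hxc), Int.fract_eq_self.mpr ⟨by nlinarith, by linarith⟩]

lemma Tpos_high (hβ1 : 1 < β) (hβ2 : β < 2) (hα0 : 0 < α) (hα1 : α < 2 - β)
    (hxc : (1 - α) / β ≤ x) (hx1 : x ≤ 1) :
    Tpos β α x = β * x + α - 1 := by
  have hb := bpos hβ1
  rcases eq_or_lt_of_le hxc with h | h
  · rw [Tpos, if_pos h.symm, ← h]
    field_simp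
    ring
  · have h1 : 1 - α < β * x := by
      have := (div_lt_iff₀ hb).mp h
      linarith [this]
    have h2 : β * x + α - 1 < 1 := by nlinarith
    rw [Tpos, if_neg (ne_of_gt h)]
    have : Int.fract (β * x + α) = Int.fract (β * x + α - 1) := by
      rw [show β * x + α - 1 = β * x + α - (1:ℤ) by push_cast; ring, Int.fract_sub_intCast]
    rw [this, Int.fract_eq_self.mpr ⟨by linarith, by linarith⟩]

lemma Tneg_low (hβ1 : 1 < β) (hα0 : 0 < α) (hx0 : 0 ≤ x) (hxc : x ≤ (1 - α) / β) :
    Tneg β α x = β * x + α := by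
  have hb := bpos hβ1
  rcases eq_or_lt_of_le hxc with h | h
  · rw [Tneg, if_pos h, h]
    field_simp
    ring
  · have h1 : β * x < 1 - α := by
      have := (lt_div_iff₀ hb).mp h
      linarith [this]
    rw [Tneg, if_neg (ne_of_lt h), Int.fract_eq_self.mpr ⟨by nlinarith, by linarith⟩]

lemma Tneg_high (hβ1 : 1 < β) (hβ2 : β < 2) (hα0 : 0 < α) (hα1 : α < 2 - β)
    (hxc : (1 - α) / β < x) (hx1 : x ≤ 1) :
    Tneg β α x = β * x + α - 1 := by
  have hb := bpos hβ1
  have h1 : 1 - α < β * x := by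
    have := (div_lt_iff₀ hb).mp hxc
    linarith [this]
  have h2 : β * x + α - 1 < 1 := by nlinarith
  rw [Tneg, if_neg (ne_of_gt hxc)]
  have : Int.fract (β * x + α) = Int.fract (β * x + α - 1) := by
    rw [show β * x + α - 1 = β * x + α - (1:ℤ) by push_cast; ring, Int.fract_sub_intCast]
  rw [this, Int.fract_eq_self.mpr ⟨by linarith, by linarith⟩]

lemma Tpos_mem (hβ1 : 1 < β) (hβ2 : β < 2) (hα0 : 0 < α) (hα1 : α < 2 - β)
    (hx : x ∈ Set.Icc (0:ℝ) 1) : Tpos β α x ∈ Set.Icc (0:ℝ) 1 := by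
  obtain ⟨hx0, hx1⟩ := hx
  by_cases h : x < (1 - α) / β
  · rw [Tpos_low hβ1 hα0 hx0 h]
    have hb := bpos hβ1
    have h1 : β * x < 1 - α := by
      have := (lt_div_iff₀ hb).mp h; linarith [this]
    constructor <;> nlinarith
  · rw [Tpos_high hβ1 hβ2 hα0 hα1 (le_of_not_gt h) hx1]
    have hb := bpos hβ1
    have h1 : 1 - α ≤ β * x := by
      have := (div_le_iff₀ hb).mp (le_of_not_gt h); linarith [this]
    constructor <;> nlinarith

lemma Tneg_mem (hβ1 : 1 < β) (hβ2 : β < 2) (hα0 : 0 < α) (hα1 : α < 2 - β)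
    (hx : x ∈ Set.Icc (0:ℝ) 1) : Tneg β α x ∈ Set.Icc (0:ℝ) 1 := by
  obtain ⟨hx0, hx1⟩ := hx
  by_cases h : x ≤ (1 - α) / β
  · rw [Tneg_low hβ1 hα0 hx0 h]
    have hb := bpos hβ1
    have h1 : β * x ≤ 1 - α := by
      have := (le_div_iff₀ hb).mp h; linarith [this]
    constructor <;> nlinarith
  · rw [Tneg_high hβ1 hβ2 hα0 hα1 (lt_of_not_ge h) hx1]
    have hb := bpos hβ1
    have h1 : 1 - α < β * x := by
      have := (div_lt_iff₀ hb).mp (lt_of_not_ge h); linarith [this]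
    constructor <;> nlinarith

lemma Tpos_iter_mem (hβ1 : 1 < β) (hβ2 : β < 2) (hα0 : 0 < α) (hα1 : α < 2 - β)
    (hx : x ∈ Set.Icc (0:ℝ) 1) (n : ℕ) : (Tpos β α)^[n] x ∈ Set.Icc (0:ℝ) 1 := by
  induction n with
  | zero => simpa
  | succ n ih => rw [Function.iterate_succ_apply']; exact Tpos_mem hβ1 hβ2 hα0 hα1 ih

lemma Tneg_iter_mem (hβ1 : 1 < β) (hβ2 : β < 2) (hα0 : 0 < α) (hα1 : α < 2 - β)
    (hx : x ∈ Set.Icc (0:ℝ) 1) (n : ℕ) : (Tneg β α)^[n] x ∈ Set.Icc (0:ℝ) 1 := by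
  induction n with
  | zero => simpa
  | succ n ih => rw [Function.iterate_succ_apply']; exact Tneg_mem hβ1 hβ2 hα0 hα1 ih

end SFTAux

namespace SFTAux

def digit (b : Bool) : ℝ := if b then 1 else 0

def piF (β α : ℝ) (ω : ℕ → Bool) : ℝ := ∑' n : ℕ, (digit (ω n) - α) * (β ^ (n+1))⁻¹

variable {β α x : ℝ}

lemma digit_abs (hα0 : 0 < α) (hα1' : α < 1) (b : Bool) : |digit b - α| ≤ 1 := by
  cases b <;> simp [digit, abs_le] <;> constructor <;> linarith

lemma term_norm_le (hβ1 : 1 < β) (hα0 : 0 < α) (hα1' : α < 1) (ω : ℕ → Bool) (n : ℕ) :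
    ‖(digit (ω n) - α) * (β ^ (n+1))⁻¹‖ ≤ (β⁻¹) ^ (n+1) := by
  have hb := bpos hβ1
  rw [norm_mul, Real.norm_eq_abs, Real.norm_eq_abs,
    abs_of_nonneg (by positivity : (0:ℝ) ≤ (β ^ (n+1))⁻¹), ← inv_pow]
  calc |digit (ω n) - α| * (β⁻¹) ^ (n+1) ≤ 1 * (β⁻¹) ^ (n+1) :=
        mul_le_mul_of_nonneg_right (digit_abs hα0 hα1' _) (by positivity)
    _ = (β⁻¹) ^ (n+1) := one_mul _

lemma geom_summable (hβ1 : 1 < β) : Summable (fun n : ℕ => (β⁻¹) ^ (n+1)) := by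
  have hb := bpos hβ1
  have hinv0 : (0:ℝ) ≤ β⁻¹ := by positivity
  have hinv1 : β⁻¹ < 1 := by rw [inv_lt_one_iff₀]; right; exact hβ1
  exact ((summable_geometric_of_lt_one hinv0 hinv1).mul_left β⁻¹).congr
    (fun n => by rw [pow_succ'])

lemma piF_summable (hβ1 : 1 < β) (hα0 : 0 < α) (hα1' : α < 1) (ω : ℕ → Bool) :
    Summable (fun n : ℕ => (digit (ω n) - α) * (β ^ (n+1))⁻¹) :=
  Summable.of_norm_bounded (geom_summable hβ1) (term_norm_le hβ1 hα0 hα1' ω)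

lemma piF_shift (hβ1 : 1 < β) (hα0 : 0 < α) (hα1' : α < 1) (ω : ℕ → Bool) :
    piF β α ω = (digit (ω 0) - α) * β⁻¹ + β⁻¹ * piF β α (fun n => ω (n+1)) := by
  have hb := bpos hβ1
  have hs := piF_summable hβ1 hα0 hα1' ω
  rw [piF, Summable.tsum_eq_zero_add hs]
  congr 1
  · norm_num
  · have hc : ∀ n : ℕ, (digit (ω (n+1)) - α) * (β ^ (n+1+1))⁻¹
        = β⁻¹ * ((digit (ω (n+1)) - α) * (β ^ (n+1))⁻¹) := by
      intro n
      rw [pow_succ β (n+1), mul_inv]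
      ring
    rw [tsum_congr hc, tsum_mul_left, piF]

lemma piF_abs (hβ1 : 1 < β) (hα0 : 0 < α) (hα1' : α < 1) (ω : ℕ → Bool) :
    |piF β α ω| ≤ (β - 1)⁻¹ := by
  have hb := bpos hβ1
  have hinv0 : (0:ℝ) ≤ β⁻¹ := by positivity
  have hinv1 : β⁻¹ < 1 := by rw [inv_lt_one_iff₀]; right; exact hβ1
  have hgs := geom_summable hβ1
  have hs := piF_summable hβ1 hα0 hα1' ω
  have h1 : |piF β α ω| ≤ ∑' n : ℕ, (β⁻¹) ^ (n+1) := by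
    rw [piF, ← Real.norm_eq_abs]
    exact (norm_tsum_le_tsum_norm hs.norm).trans
      (Summable.tsum_le_tsum (term_norm_le hβ1 hα0 hα1' ω) hs.norm hgs)
  have h2 : ∑' n : ℕ, (β⁻¹) ^ (n+1) = (β - 1)⁻¹ := by
    have hc : ∀ n : ℕ, (β⁻¹) ^ (n+1) = β⁻¹ * (β⁻¹) ^ n := fun n => by rw [pow_succ']
    rw [tsum_congr hc, tsum_mul_left, tsum_geometric_of_lt_one hinv0 hinv1]
    field_simp
  linarith [h1, h2.le, h2.ge]

lemma tauPos_shift (x : ℝ) : (fun n => tauPos β α x (n+1)) = tauPos β α (Tpos β α x) := by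
  funext n; rfl

lemma tauNeg_shift (x : ℝ) : (fun n => tauNeg β α x (n+1)) = tauNeg β α (Tneg β α x) := by
  funext n; rfl

lemma tauPos_zero (x : ℝ) : tauPos β α x 0 = if x < (1 - α) / β then false else true := by
  rfl

lemma tauNeg_zero (x : ℝ) : tauNeg β α x 0 = if x ≤ (1 - α) / β then false else true := by
  rfl

lemma step_pos (hβ1 : 1 < β) (hβ2 : β < 2) (hα0 : 0 < α) (hα1 : α < 2 - β)
    (hx : x ∈ Set.Icc (0:ℝ) 1) :
    β * x = (digit (tauPos β α x 0) - α) + Tpos β α x := by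
  by_cases h : x < (1 - α) / β
  · rw [tauPos_zero, if_pos h, Tpos_low hβ1 hα0 hx.1 h]; simp [digit]; try ring
  · rw [tauPos_zero, if_neg h, Tpos_high hβ1 hβ2 hα0 hα1 (le_of_not_gt h) hx.2]
    simp [digit]; try ring

lemma step_neg (hβ1 : 1 < β) (hβ2 : β < 2) (hα0 : 0 < α) (hα1 : α < 2 - β)
    (hx : x ∈ Set.Icc (0:ℝ) 1) :
    β * x = (digit (tauNeg β α x 0) - α) + Tneg β α x := by
  by_cases h : x ≤ (1 - α) / β
  · rw [tauNeg_zero, if_pos h, Tneg_low hβ1 hα0 hx.1 h]; simp [digit]; try ring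
  · rw [tauNeg_zero, if_neg h, Tneg_high hβ1 hβ2 hα0 hα1 (lt_of_not_ge h) hx.2]
    simp [digit]; try ring

end SFTAux

namespace SFTAux

variable {β α x : ℝ}

lemma pi_tau_step_pos (hβ1 : 1 < β) (hβ2 : β < 2) (hα0 : 0 < α) (hα1 : α < 2 - β)
    (hx : x ∈ Set.Icc (0:ℝ) 1) :
    x - piF β α (tauPos β α x)
      = β⁻¹ * (Tpos β α x - piF β α (tauPos β α (Tpos β α x))) := by
  have hb := bpos hβ1
  have hα1' : α < 1 := by linarith
  have hsh := piF_shift hβ1 hα0 hα1' (tauPos β α x)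
  rw [tauPos_shift] at hsh
  have hst := step_pos hβ1 hβ2 hα0 hα1 hx
  rw [hsh]
  field_simp
  linarith

lemma pi_tau_step_neg (hβ1 : 1 < β) (hβ2 : β < 2) (hα0 : 0 < α) (hα1 : α < 2 - β)
    (hx : x ∈ Set.Icc (0:ℝ) 1) :
    x - piF β α (tauNeg β α x)
      = β⁻¹ * (Tneg β α x - piF β α (tauNeg β α (Tneg β α x))) := by
  have hb := bpos hβ1
  have hα1' : α < 1 := by linarith
  have hsh := piF_shift hβ1 hα0 hα1' (tauNeg β α x)
  rw [tauNeg_shift] at hsh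
  have hst := step_neg hβ1 hβ2 hα0 hα1 hx
  rw [hsh]
  field_simp
  linarith

lemma pi_tauPos (hβ1 : 1 < β) (hβ2 : β < 2) (hα0 : 0 < α) (hα1 : α < 2 - β)
    (hx : x ∈ Set.Icc (0:ℝ) 1) : piF β α (tauPos β α x) = x := by
  have hb := bpos hβ1
  have hα1' : α < 1 := by linarith
  have hinv0 : (0:ℝ) ≤ β⁻¹ := by positivity
  have hinv1 : β⁻¹ < 1 := by rw [inv_lt_one_iff₀]; right; exact hβ1
  have key : ∀ n : ℕ, x - piF β α (tauPos β α x)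
      = (β⁻¹) ^ n * ((Tpos β α)^[n] x - piF β α (tauPos β α ((Tpos β α)^[n] x))) := by
    intro n
    induction n with
    | zero => simp
    | succ n ih =>
      rw [ih, Function.iterate_succ_apply',
        pi_tau_step_pos hβ1 hβ2 hα0 hα1 (Tpos_iter_mem hβ1 hβ2 hα0 hα1 hx n), pow_succ]
      ring
  have hbd : ∀ n : ℕ, |x - piF β α (tauPos β α x)| ≤ (β⁻¹) ^ n * (1 + (β - 1)⁻¹) := by
    intro n
    rw [key n, abs_mul, abs_of_nonneg (by positivity : (0:ℝ) ≤ (β⁻¹) ^ n)]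
    apply mul_le_mul_of_nonneg_left _ (by positivity)
    have h1 := Tpos_iter_mem hβ1 hβ2 hα0 hα1 hx n
    have h2 := piF_abs hβ1 hα0 hα1' (tauPos β α ((Tpos β α)^[n] x))
    rw [abs_sub_comm]
    calc |piF β α (tauPos β α ((Tpos β α)^[n] x)) - (Tpos β α)^[n] x|
        ≤ |piF β α (tauPos β α ((Tpos β α)^[n] x))| + |(Tpos β α)^[n] x| := abs_sub _ _
      _ ≤ (β - 1)⁻¹ + 1 := by
          apply add_le_add h2
          rw [abs_of_nonneg h1.1]; exact h1.2
      _ = 1 + (β - 1)⁻¹ := by ring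
  have hlim : Filter.Tendsto (fun n : ℕ => (β⁻¹) ^ n * (1 + (β - 1)⁻¹))
      Filter.atTop (nhds 0) := by
    have := (tendsto_pow_atTop_nhds_zero_of_lt_one hinv0 hinv1).mul_const (1 + (β - 1)⁻¹)
    simpa using this
  have : |x - piF β α (tauPos β α x)| ≤ 0 := ge_of_tendsto' hlim hbd
  have := abs_nonneg (x - piF β α (tauPos β α x))
  have h0 : |x - piF β α (tauPos β α x)| = 0 := le_antisymm ‹_› ‹_›
  have := abs_eq_zero.mp h0
  linarith [this]

lemma pi_tauNeg (hβ1 : 1 < β) (hβ2 : β < 2) (hα0 : 0 < α) (hα1 : α < 2 - β)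
    (hx : x ∈ Set.Icc (0:ℝ) 1) : piF β α (tauNeg β α x) = x := by
  have hb := bpos hβ1
  have hα1' : α < 1 := by linarith
  have hinv0 : (0:ℝ) ≤ β⁻¹ := by positivity
  have hinv1 : β⁻¹ < 1 := by rw [inv_lt_one_iff₀]; right; exact hβ1
  have key : ∀ n : ℕ, x - piF β α (tauNeg β α x)
      = (β⁻¹) ^ n * ((Tneg β α)^[n] x - piF β α (tauNeg β α ((Tneg β α)^[n] x))) := by
    intro n
    induction n with
    | zero => simp
    | succ n ih =>
      rw [ih, Function.iterate_succ_apply',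
        pi_tau_step_neg hβ1 hβ2 hα0 hα1 (Tneg_iter_mem hβ1 hβ2 hα0 hα1 hx n), pow_succ]
      ring
  have hbd : ∀ n : ℕ, |x - piF β α (tauNeg β α x)| ≤ (β⁻¹) ^ n * (1 + (β - 1)⁻¹) := by
    intro n
    rw [key n, abs_mul, abs_of_nonneg (by positivity : (0:ℝ) ≤ (β⁻¹) ^ n)]
    apply mul_le_mul_of_nonneg_left _ (by positivity)
    have h1 := Tneg_iter_mem hβ1 hβ2 hα0 hα1 hx n
    have h2 := piF_abs hβ1 hα0 hα1' (tauNeg β α ((Tneg β α)^[n] x))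
    rw [abs_sub_comm]
    calc |piF β α (tauNeg β α ((Tneg β α)^[n] x)) - (Tneg β α)^[n] x|
        ≤ |piF β α (tauNeg β α ((Tneg β α)^[n] x))| + |(Tneg β α)^[n] x| := abs_sub _ _
      _ ≤ (β - 1)⁻¹ + 1 := by
          apply add_le_add h2
          rw [abs_of_nonneg h1.1]; exact h1.2
      _ = 1 + (β - 1)⁻¹ := by ring
  have hlim : Filter.Tendsto (fun n : ℕ => (β⁻¹) ^ n * (1 + (β - 1)⁻¹))
      Filter.atTop (nhds 0) := by
    have := (tendsto_pow_atTop_nhds_zero_of_lt_one hinv0 hinv1).mul_const (1 + (β - 1)⁻¹)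
    simpa using this
  have : |x - piF β α (tauNeg β α x)| ≤ 0 := ge_of_tendsto' hlim hbd
  have := abs_nonneg (x - piF β α (tauNeg β α x))
  have h0 : |x - piF β α (tauNeg β α x)| = 0 := le_antisymm ‹_› ‹_›
  have := abs_eq_zero.mp h0
  linarith [this]

lemma piF_prefix_diff (hβ1 : 1 < β) (hα0 : 0 < α) (hα1' : α < 1) :
    ∀ (n : ℕ) (ω ω' : ℕ → Bool), (∀ k < n, ω k = ω' k) →
      piF β α ω - piF β α ω'
        = (β⁻¹) ^ n * (piF β α (fun k => ω (k + n)) - piF β α (fun k => ω' (k + n))) := by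
  intro n
  induction n with
  | zero =>
    intro ω ω' _
    have h1 : (fun k => ω (k + 0)) = ω := rfl
    have h2 : (fun k => ω' (k + 0)) = ω' := rfl
    rw [h1, h2, pow_zero, one_mul]
  | succ n ih =>
    intro ω ω' h
    have h0 : ω 0 = ω' 0 := h 0 (Nat.succ_pos n)
    have hsh := piF_shift hβ1 hα0 hα1' ω
    have hsh' := piF_shift hβ1 hα0 hα1' ω'
    have hagr : ∀ k < n, ω (k + 1) = ω' (k + 1) := fun k hk =>
      h (k + 1) (Nat.succ_lt_succ hk)
    have hih := ih (fun k => ω (k + 1)) (fun k => ω' (k + 1)) hagr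
    have e1 : (fun k => ω (k + 1 + n)) = (fun k => ω (k + (n + 1))) := by
      funext k; congr 1; omega
    have e2 : (fun k => ω' (k + 1 + n)) = (fun k => ω' (k + (n + 1))) := by
      funext k; congr 1; omega
    rw [hsh, hsh', h0]
    have : (fun k => (fun m => ω (m + 1)) (k + n)) = fun k => ω (k + 1 + n) := by
      funext k; simp [Nat.add_right_comm]
    rw [this] at hih
    have : (fun k => (fun m => ω' (m + 1)) (k + n)) = fun k => ω' (k + 1 + n) := by
      funext k; simp [Nat.add_right_comm]
    rw [this] at hih
    rw [e1, e2] at hih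
    rw [pow_succ]
    linear_combination β⁻¹ * hih

end SFTAux

namespace SFTAux

variable {β α : ℝ}

lemma beta_c (hβ1 : 1 < β) : β * ((1 - α) / β) = 1 - α := by
  field_simp

lemma xpos (hβ1 : 1 < β) (hβ2 : β < 2) (hα0 : 0 < α) (hα1 : α < 2 - β)
    (Hx : ∀ j, (Tpos β α)^[j] 0 ≠ (1 - α) / β) (j : ℕ) :
    0 < (Tpos β α)^[j+1] 0 := by
  have hb := bpos hβ1
  have hbc := beta_c (α := α) hβ1
  have hy := Tpos_iter_mem hβ1 hβ2 hα0 hα1 (by constructor <;> norm_num) j (x := 0)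
  rw [Function.iterate_succ_apply']
  by_cases h : (Tpos β α)^[j] 0 < (1 - α) / β
  · rw [Tpos_low hβ1 hα0 hy.1 h]; nlinarith [hy.1]
  · have h' : (1 - α) / β < (Tpos β α)^[j] 0 :=
      lt_of_le_of_ne (le_of_not_gt h) (Ne.symm (Hx j))
    rw [Tpos_high hβ1 hβ2 hα0 hα1 (le_of_lt h') hy.2]
    have : β * ((1 - α) / β) < β * (Tpos β α)^[j] 0 :=
      mul_lt_mul_of_pos_left h' hb
    rw [hbc] at this
    linarith

lemma xlt1 (hβ1 : 1 < β) (hβ2 : β < 2) (hα0 : 0 < α) (hα1 : α < 2 - β) (j : ℕ) :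
    (Tpos β α)^[j] 0 < 1 := by
  have hb := bpos hβ1
  have hbc := beta_c (α := α) hβ1
  cases j with
  | zero => norm_num
  | succ j =>
    have hy := Tpos_iter_mem hβ1 hβ2 hα0 hα1 (by constructor <;> norm_num) j (x := 0)
    rw [Function.iterate_succ_apply']
    by_cases h : (Tpos β α)^[j] 0 < (1 - α) / β
    · rw [Tpos_low hβ1 hα0 hy.1 h]
      have : β * (Tpos β α)^[j] 0 < β * ((1 - α) / β) := mul_lt_mul_of_pos_left h hb
      rw [hbc] at this
      linarith
    · rw [Tpos_high hβ1 hβ2 hα0 hα1 (le_of_not_gt h) hy.2]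
      nlinarith [hy.2]

lemma ylt1 (hβ1 : 1 < β) (hβ2 : β < 2) (hα0 : 0 < α) (hα1 : α < 2 - β)
    (Hy : ∀ j, (Tneg β α)^[j] 1 ≠ (1 - α) / β) (j : ℕ) :
    (Tneg β α)^[j+1] 1 < 1 := by
  have hb := bpos hβ1
  have hbc := beta_c (α := α) hβ1
  have hy := Tneg_iter_mem hβ1 hβ2 hα0 hα1 (by constructor <;> norm_num) j (x := 1)
  rw [Function.iterate_succ_apply']
  by_cases h : (Tneg β α)^[j] 1 ≤ (1 - α) / β
  · have h' : (Tneg β α)^[j] 1 < (1 - α) / β := lt_of_le_of_ne h (Hy j)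
    rw [Tneg_low hβ1 hα0 hy.1 h]
    have : β * (Tneg β α)^[j] 1 < β * ((1 - α) / β) := mul_lt_mul_of_pos_left h' hb
    rw [hbc] at this
    linarith
  · rw [Tneg_high hβ1 hβ2 hα0 hα1 (lt_of_not_ge h) hy.2]
    nlinarith [hy.2]

lemma perturb_pos (hβ1 : 1 < β) (hβ2 : β < 2) (hα0 : 0 < α) (hα1 : α < 2 - β)
    (Hx : ∀ j, (Tpos β α)^[j] 0 ≠ (1 - α) / β) (L : ℕ) :
    ∃ s : ℝ, s ∈ Set.Icc (0:ℝ) 1 ∧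
      (∀ j, j < L → ((Tpos β α)^[j] s < (1 - α) / β ↔ (Tpos β α)^[j+1] 0 < (1 - α) / β)) ∧
      (Tpos β α)^[L] s ∈ Set.Icc (0:ℝ) 1 ∧
      (Tpos β α)^[L] s < (Tpos β α)^[L+1] 0 := by
  have hb := bpos hβ1
  have hbc := beta_c (α := α) hβ1
  set c : ℝ := (1 - α) / β with hcdef
  have hc0 : 0 < c := c_pos hβ1 hβ2 hα1
  set x : ℕ → ℝ := fun j => (Tpos β α)^[j] 0 with hxdef
  have hxmem : ∀ j, x j ∈ Set.Icc (0:ℝ) 1 :=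
    fun j => Tpos_iter_mem hβ1 hβ2 hα0 hα1 (by constructor <;> norm_num) j
  have hxpos : ∀ j, 0 < x (j+1) := fun j => xpos hβ1 hβ2 hα0 hα1 Hx j
  set gap : ℕ → ℝ := fun k => if c < x (k+1) then x (k+1) - c else x (k+1) with hgapdef
  have hgap_pos : ∀ k, 0 < gap k := by
    intro k
    by_cases h : c < x (k+1)
    · simp only [hgapdef, if_pos h]; linarith
    · simp only [hgapdef, if_neg h]; exact hxpos k
  have hne : (Finset.range (L+1)).Nonempty := ⟨0, Finset.mem_range.mpr (Nat.succ_pos L)⟩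
  set δ : ℝ := (Finset.range (L+1)).inf' hne gap with hδdef
  have hδpos : 0 < δ := by
    rw [hδdef, Finset.lt_inf'_iff]
    exact fun k _ => hgap_pos k
  have hδle : ∀ k, k ≤ L → δ ≤ gap k := by
    intro k hk
    exact Finset.inf'_le gap (Finset.mem_range.mpr (Nat.lt_succ_of_le hk))
  have hbL : (0:ℝ) < β ^ L := by positivity
  set ε : ℝ := δ / (2 * β ^ L) with hεdef
  have hεpos : 0 < ε := by positivity
  have hεk : ∀ k, k ≤ L → β ^ k * ε < gap k := by
    intro k hk
    have h1 : β ^ k ≤ β ^ L := pow_le_pow_right₀ (le_of_lt hβ1) hk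
    have h2 : β ^ k * ε ≤ β ^ L * ε := mul_le_mul_of_nonneg_right h1 (le_of_lt hεpos)
    have h3 : β ^ L * ε = δ / 2 := by
      rw [hεdef]; field_simp
    have := hδle k hk
    linarith
  set s : ℝ := x 1 - ε with hsdef
  have main : ∀ j, j ≤ L → (Tpos β α)^[j] s = x (j+1) - β ^ j * ε := by
    intro j
    induction j with
    | zero => intro _; simpa [hsdef] using rfl
    | succ j ih =>
      intro hj
      have hjL : j ≤ L := Nat.le_of_succ_le hj
      have hg := hεk j hjL
      have hej : 0 < β ^ j * ε := by positivity
      have hxm := hxmem (j+1)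
      have hnej := Hx (j+1)
      rw [Function.iterate_succ_apply', ih hjL]
      have hx2 : x (j+1+1) = Tpos β α (x (j+1)) := Function.iterate_succ_apply' _ _ _
      by_cases hcx : x (j+1) < c
      · have hgj : gap j = x (j+1) := by
          simp only [hgapdef, if_neg (not_lt.mpr (le_of_lt hcx))]
        rw [hgj] at hg
        rw [Tpos_low hβ1 hα0 (by linarith) (by rw [← hcdef]; linarith)]
        rw [hx2, Tpos_low hβ1 hα0 hxm.1 (by rw [← hcdef]; exact hcx), pow_succ]
        ring
      · have hcx' : c < x (j+1) := lt_of_le_of_ne (le_of_not_gt hcx) (Ne.symm hnej)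
        have hgj : gap j = x (j+1) - c := by simp only [hgapdef, if_pos hcx']
        rw [hgj] at hg
        rw [Tpos_high hβ1 hβ2 hα0 hα1 (by rw [← hcdef]; linarith) (by linarith [hxm.2])]
        rw [hx2, Tpos_high hβ1 hβ2 hα0 hα1 (by rw [← hcdef]; linarith) hxm.2, pow_succ]
        ring
  have hgap_le : ∀ k, k ≤ L → gap k ≤ x (k+1) := by
    intro k _
    by_cases h : c < x (k+1)
    · simp only [hgapdef, if_pos h]; linarith
    · simp only [hgapdef, if_neg h]
      exact le_refl _
  refine ⟨s, ?_, ?_, ?_, ?_⟩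
  · have h0 := hεk 0 (Nat.zero_le L)
    have := hgap_le 0 (Nat.zero_le L)
    have := (hxmem 1).2
    rw [pow_zero, one_mul] at h0
    constructor
    · rw [hsdef]; linarith
    · rw [hsdef]; linarith
  · intro j hjL
    have hm := main j (le_of_lt hjL)
    have hg := hεk j (le_of_lt hjL)
    have hej : 0 < β ^ j * ε := by positivity
    have hiter : (Tpos β α)^[j+1] 0 = x (j+1) := rfl
    rw [hm, hiter]
    by_cases hcx : x (j+1) < c
    · constructor
      · intro _; exact hcx
      · intro _; linarith
    · have hcx' : c < x (j+1) := lt_of_le_of_ne (le_of_not_gt hcx) (Ne.symm (Hx (j+1)))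
      have hgj : gap j = x (j+1) - c := by simp only [hgapdef, if_pos hcx']
      rw [hgj] at hg
      constructor
      · intro h; exfalso; linarith
      · intro h; exfalso; exact hcx h
  · have hm := main L (le_refl L)
    have hg := hεk L (le_refl L)
    have := hgap_le L (le_refl L)
    have := (hxmem (L+1)).2
    have hej : 0 < β ^ L * ε := by positivity
    rw [hm]
    constructor <;> linarith
  · have hm := main L (le_refl L)
    have hej : 0 < β ^ L * ε := by positivity
    rw [hm]
    show x (L+1) - β ^ L * ε < x (L+1)
    linarith

lemma perturb_neg (hβ1 : 1 < β) (hβ2 : β < 2) (hα0 : 0 < α) (hα1 : α < 2 - β)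
    (Hy : ∀ j, (Tneg β α)^[j] 1 ≠ (1 - α) / β) (L : ℕ) :
    ∃ s : ℝ, s ∈ Set.Icc (0:ℝ) 1 ∧
      (∀ j, j < L → ((Tneg β α)^[j] s ≤ (1 - α) / β ↔ (Tneg β α)^[j+1] 1 ≤ (1 - α) / β)) ∧
      (Tneg β α)^[L] s ∈ Set.Icc (0:ℝ) 1 ∧
      (Tneg β α)^[L+1] 1 < (Tneg β α)^[L] s := by
  have hb := bpos hβ1
  have hbc := beta_c (α := α) hβ1
  set c : ℝ := (1 - α) / β with hcdef
  have hc1 : c < 1 := c_lt_one hβ1 hα0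
  set y : ℕ → ℝ := fun j => (Tneg β α)^[j] 1 with hydef
  have hymem : ∀ j, y j ∈ Set.Icc (0:ℝ) 1 :=
    fun j => Tneg_iter_mem hβ1 hβ2 hα0 hα1 (by constructor <;> norm_num) j
  have hylt : ∀ j, y (j+1) < 1 := fun j => ylt1 hβ1 hβ2 hα0 hα1 Hy j
  set gap : ℕ → ℝ := fun k => if y (k+1) < c then c - y (k+1) else 1 - y (k+1) with hgapdef
  have hgap_pos : ∀ k, 0 < gap k := by
    intro k
    by_cases h : y (k+1) < c
    · simp only [hgapdef, if_pos h]; linarith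
    · simp only [hgapdef, if_neg h]; linarith [hylt k]
  have hne : (Finset.range (L+1)).Nonempty := ⟨0, Finset.mem_range.mpr (Nat.succ_pos L)⟩
  set δ : ℝ := (Finset.range (L+1)).inf' hne gap with hδdef
  have hδpos : 0 < δ := by
    rw [hδdef, Finset.lt_inf'_iff]
    exact fun k _ => hgap_pos k
  have hδle : ∀ k, k ≤ L → δ ≤ gap k := by
    intro k hk
    exact Finset.inf'_le gap (Finset.mem_range.mpr (Nat.lt_succ_of_le hk))
  have hbL : (0:ℝ) < β ^ L := by positivity
  set ε : ℝ := δ / (2 * β ^ L) with hεdef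
  have hεpos : 0 < ε := by positivity
  have hεk : ∀ k, k ≤ L → β ^ k * ε < gap k := by
    intro k hk
    have h1 : β ^ k ≤ β ^ L := pow_le_pow_right₀ (le_of_lt hβ1) hk
    have h2 : β ^ k * ε ≤ β ^ L * ε := mul_le_mul_of_nonneg_right h1 (le_of_lt hεpos)
    have h3 : β ^ L * ε = δ / 2 := by
      rw [hεdef]; field_simp
    have := hδle k hk
    linarith
  set s : ℝ := y 1 + ε with hsdef
  have hgap_le1 : ∀ k, k ≤ L → gap k ≤ 1 - y (k+1) := by
    intro k _
    by_cases h : y (k+1) < c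
    · simp only [hgapdef, if_pos h]; linarith
    · simp only [hgapdef, if_neg h]
      exact le_refl _
  have main : ∀ j, j ≤ L → (Tneg β α)^[j] s = y (j+1) + β ^ j * ε := by
    intro j
    induction j with
    | zero => intro _; simpa [hsdef] using rfl
    | succ j ih =>
      intro hj
      have hjL : j ≤ L := Nat.le_of_succ_le hj
      have hg := hεk j hjL
      have hej : 0 < β ^ j * ε := by positivity
      have hym := hymem (j+1)
      have hnej := Hy (j+1)
      rw [Function.iterate_succ_apply', ih hjL]
      have hy2 : y (j+1+1) = Tneg β α (y (j+1)) := Function.iterate_succ_apply' _ _ _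
      by_cases hcy : y (j+1) < c
      · have hgj : gap j = c - y (j+1) := by simp only [hgapdef, if_pos hcy]
        rw [hgj] at hg
        rw [Tneg_low hβ1 hα0 (by linarith [hym.1]) (by rw [← hcdef]; linarith)]
        rw [hy2, Tneg_low hβ1 hα0 hym.1 (by rw [← hcdef]; linarith), pow_succ]
        ring
      · have hcy' : c < y (j+1) := lt_of_le_of_ne (le_of_not_gt hcy) (Ne.symm hnej)
        have hgj : gap j = 1 - y (j+1) := by
          simp only [hgapdef, if_neg (not_lt.mpr (le_of_lt hcy'))]
        rw [hgj] at hg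
        rw [Tneg_high hβ1 hβ2 hα0 hα1 (by rw [← hcdef]; linarith) (by linarith)]
        rw [hy2, Tneg_high hβ1 hβ2 hα0 hα1 (by rw [← hcdef]; linarith) hym.2, pow_succ]
        ring
  refine ⟨s, ?_, ?_, ?_, ?_⟩
  · have h0 := hεk 0 (Nat.zero_le L)
    have := hgap_le1 0 (Nat.zero_le L)
    have := (hymem 1).1
    rw [pow_zero, one_mul] at h0
    constructor
    · rw [hsdef]; linarith
    · rw [hsdef]; linarith
  · intro j hjL
    have hm := main j (le_of_lt hjL)
    have hg := hεk j (le_of_lt hjL)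
    have hej : 0 < β ^ j * ε := by positivity
    have hiter : (Tneg β α)^[j+1] 1 = y (j+1) := rfl
    rw [hm, hiter]
    by_cases hcy : y (j+1) < c
    · have hgj : gap j = c - y (j+1) := by simp only [hgapdef, if_pos hcy]
      rw [hgj] at hg
      constructor
      · intro _; linarith
      · intro _; linarith
    · have hcy' : c < y (j+1) := lt_of_le_of_ne (le_of_not_gt hcy) (Ne.symm (Hy (j+1)))
      constructor
      · intro h; exfalso; linarith
      · intro h; exfalso; linarith
  · have hm := main L (le_refl L)
    have hg := hεk L (le_refl L)
    have := hgap_le1 L (le_refl L)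
    have := (hymem (L+1)).1
    have hej : 0 < β ^ L * ε := by positivity
    rw [hm]
    constructor <;> linarith
  · have hm := main L (le_refl L)
    have hej : 0 < β ^ L * ε := by positivity
    rw [hm]
    show y (L+1) < y (L+1) + β ^ L * ε
    linarith

end SFTAux

namespace SFTAux

variable {β α : ℝ}

lemma Tpos_c : Tpos β α ((1 - α) / β) = 0 := by simp [Tpos]

lemma Tneg_c : Tneg β α ((1 - α) / β) = 1 := by simp [Tneg]

lemma hits_c_pos (hβ1 : 1 < β) (hβ2 : β < 2) (hα0 : 0 < α) (hα1 : α < 2 - β)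
    (hSFT : IsSFT (OmegaSet β α)) :
    ∃ m, (Tpos β α)^[m] 0 = (1 - α) / β := by
  by_contra hcon
  push_neg at hcon
  obtain ⟨F, hF⟩ := hSFT
  set L := F.sup List.length with hL
  obtain ⟨s, hs, hdig, hmemL, hlt⟩ := perturb_pos hβ1 hβ2 hα0 hα1 hcon L
  have hα1' : α < 1 := by linarith
  have hc0 := c_pos hβ1 hβ2 hα1
  have hc1 := c_lt_one hβ1 hα0
  have hcIcc : (1 - α) / β ∈ Set.Icc (0:ℝ) 1 := ⟨le_of_lt hc0, le_of_lt hc1⟩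
  set ξ : ℕ → Bool := tauPos β α s with hξ
  set ν : ℕ → Bool := fun k => if k < 2 then kPlus β α k else ξ (k - 2) with hν
  have hkmem : kPlus β α ∈ OmegaSet β α := Or.inl ⟨(1 - α) / β, hcIcc, rfl⟩
  have hξmem : ξ ∈ OmegaSet β α := Or.inl ⟨s, hs, rfl⟩
  have hkF : ∀ m n : ℕ, List.ofFn (fun i : Fin n => kPlus β α (m + i)) ∉ F := by
    have h := hkmem; rw [hF] at h; exact h
  have hξF : ∀ m n : ℕ, List.ofFn (fun i : Fin n => ξ (m + i)) ∉ F := by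
    have h := hξmem; rw [hF] at h; exact h
  have hagree : ∀ k, k < L + 2 → ν k = kPlus β α k := by
    intro k hk
    by_cases h2 : k < 2
    · simp only [hν, if_pos h2]
    · simp only [hν, if_neg h2]
      have hk2 : 2 ≤ k := le_of_not_gt h2
      have hlt2 : k - 2 < L := by omega
      have hiff := hdig (k - 2) hlt2
      show tauPos β α s (k - 2) = kPlus β α k
      have hck : (Tpos β α)^[k] ((1 - α) / β) = (Tpos β α)^[k - 2 + 1] 0 := by
        rw [show k = (k - 1) + 1 by omega, Function.iterate_succ_apply, Tpos_c]
        congr 1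
        omega
      simp only [tauPos, kPlus]
      rw [hck]
      by_cases h : (Tpos β α)^[k - 2] s < (1 - α) / β
      · rw [if_pos h, if_pos (hiff.mp h)]
      · rw [if_neg h, if_neg (fun hh => h (hiff.mpr hh))]
  have hνF : ∀ m n : ℕ, List.ofFn (fun i : Fin n => ν (m + i)) ∉ F := by
    intro m n
    by_cases hm2 : 2 ≤ m
    · have he : (fun i : Fin n => ν (m + i)) = (fun i : Fin n => ξ ((m - 2) + i)) := by
        funext i
        simp only [hν]
        rw [if_neg (by omega : ¬ (m + (i:ℕ) < 2))]
        congr 1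
        omega
      rw [he]
      exact hξF (m - 2) n
    · by_cases hmn : m + n ≤ L + 2
      · have he : (fun i : Fin n => ν (m + i)) = (fun i : Fin n => kPlus β α (m + i)) := by
          funext i
          exact hagree (m + i) (by have := i.isLt; omega)
        rw [he]
        exact hkF m n
      · intro hmem
        have hlen := Finset.le_sup (f := List.length) hmem
        rw [List.length_ofFn] at hlen
        omega
  have hνmem : ν ∈ OmegaSet β α := by rw [hF]; exact hνF
  have hsig : (fun k => ν (k + (L + 2))) = tauPos β α ((Tpos β α)^[L] s) := by
    funext k
    simp only [hν]
    rw [if_neg (by omega : ¬ (k + (L + 2) < 2))]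
    show tauPos β α s (k + (L + 2) - 2) = tauPos β α ((Tpos β α)^[L] s) k
    simp only [tauPos]
    rw [show k + (L + 2) - 2 = k + L by omega, Function.iterate_add_apply]
  have hsigk : (fun k => kPlus β α (k + (L + 2))) = tauPos β α ((Tpos β α)^[L + 1] 0) := by
    funext k
    simp only [kPlus, tauPos]
    have hit : (Tpos β α)^[k + (L + 2)] ((1 - α) / β)
        = (Tpos β α)^[k] ((Tpos β α)^[L + 1] 0) := by
      rw [show k + (L + 2) = (k + (L + 1)) + 1 by omega, Function.iterate_succ_apply, Tpos_c,
        Function.iterate_add_apply]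
    rw [hit]
  have hmem1 : (Tpos β α)^[L + 1] 0 ∈ Set.Icc (0:ℝ) 1 :=
    Tpos_iter_mem hβ1 hβ2 hα0 hα1 (by constructor <;> norm_num) (L + 1)
  have hdiff := piF_prefix_diff hβ1 hα0 hα1' (L + 2) ν (kPlus β α) hagree
  rw [hsig, hsigk, pi_tauPos hβ1 hβ2 hα0 hα1 hmemL, pi_tauPos hβ1 hβ2 hα0 hα1 hmem1] at hdiff
  have hkc : piF β α (kPlus β α) = (1 - α) / β := pi_tauPos hβ1 hβ2 hα0 hα1 hcIcc
  have hνlt : piF β α ν < (1 - α) / β := by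
    have hpow : (0:ℝ) < (β⁻¹) ^ (L + 2) := by positivity
    have hneg : (Tpos β α)^[L] s - (Tpos β α)^[L + 1] 0 < 0 := by linarith
    nlinarith [hdiff, hkc]
  have hν0 : ν 0 = true := by
    simp only [hν]
    rw [if_pos (by norm_num : (0:ℕ) < 2)]
    simp only [kPlus, tauPos, Function.iterate_zero_apply]
    simp
  obtain hcase | hcase := hνmem
  · obtain ⟨z, hz, hze⟩ := hcase
    have hpz : piF β α ν = z := by rw [← hze]; exact pi_tauPos hβ1 hβ2 hα0 hα1 hz
    have hd : tauPos β α z 0 = true := by rw [hze]; exact hν0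
    simp only [tauPos, Function.iterate_zero_apply] at hd
    by_cases h : z < (1 - α) / β
    · simp [h] at hd
    · linarith [le_of_not_gt h]
  · obtain ⟨z, hz, hze⟩ := hcase
    have hpz : piF β α ν = z := by rw [← hze]; exact pi_tauNeg hβ1 hβ2 hα0 hα1 hz
    have hd : tauNeg β α z 0 = true := by rw [hze]; exact hν0
    simp only [tauNeg, Function.iterate_zero_apply] at hd
    by_cases h : z ≤ (1 - α) / β
    · simp [h] at hd
    · linarith [lt_of_not_ge h]

lemma hits_c_neg (hβ1 : 1 < β) (hβ2 : β < 2) (hα0 : 0 < α) (hα1 : α < 2 - β)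
    (hSFT : IsSFT (OmegaSet β α)) :
    ∃ m, (Tneg β α)^[m] 1 = (1 - α) / β := by
  by_contra hcon
  push_neg at hcon
  obtain ⟨F, hF⟩ := hSFT
  set L := F.sup List.length with hL
  obtain ⟨s, hs, hdig, hmemL, hlt⟩ := perturb_neg hβ1 hβ2 hα0 hα1 hcon L
  have hα1' : α < 1 := by linarith
  have hc0 := c_pos hβ1 hβ2 hα1
  have hc1 := c_lt_one hβ1 hα0
  have hcIcc : (1 - α) / β ∈ Set.Icc (0:ℝ) 1 := ⟨le_of_lt hc0, le_of_lt hc1⟩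
  set ξ : ℕ → Bool := tauNeg β α s with hξ
  set ν : ℕ → Bool := fun k => if k < 2 then kMinus β α k else ξ (k - 2) with hν
  have hkmem : kMinus β α ∈ OmegaSet β α := Or.inr ⟨(1 - α) / β, hcIcc, rfl⟩
  have hξmem : ξ ∈ OmegaSet β α := Or.inr ⟨s, hs, rfl⟩
  have hkF : ∀ m n : ℕ, List.ofFn (fun i : Fin n => kMinus β α (m + i)) ∉ F := by
    have h := hkmem; rw [hF] at h; exact h
  have hξF : ∀ m n : ℕ, List.ofFn (fun i : Fin n => ξ (m + i)) ∉ F := by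
    have h := hξmem; rw [hF] at h; exact h
  have hagree : ∀ k, k < L + 2 → ν k = kMinus β α k := by
    intro k hk
    by_cases h2 : k < 2
    · simp only [hν, if_pos h2]
    · simp only [hν, if_neg h2]
      have hk2 : 2 ≤ k := le_of_not_gt h2
      have hlt2 : k - 2 < L := by omega
      have hiff := hdig (k - 2) hlt2
      show tauNeg β α s (k - 2) = kMinus β α k
      have hck : (Tneg β α)^[k] ((1 - α) / β) = (Tneg β α)^[k - 2 + 1] 1 := by
        rw [show k = (k - 1) + 1 by omega, Function.iterate_succ_apply, Tneg_c]
        congr 1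
        omega
      simp only [tauNeg, kMinus]
      rw [hck]
      by_cases h : (Tneg β α)^[k - 2] s ≤ (1 - α) / β
      · rw [if_pos h, if_pos (hiff.mp h)]
      · rw [if_neg h, if_neg (fun hh => h (hiff.mpr hh))]
  have hνF : ∀ m n : ℕ, List.ofFn (fun i : Fin n => ν (m + i)) ∉ F := by
    intro m n
    by_cases hm2 : 2 ≤ m
    · have he : (fun i : Fin n => ν (m + i)) = (fun i : Fin n => ξ ((m - 2) + i)) := by
        funext i
        simp only [hν]
        rw [if_neg (by omega : ¬ (m + (i:ℕ) < 2))]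
        congr 1
        omega
      rw [he]
      exact hξF (m - 2) n
    · by_cases hmn : m + n ≤ L + 2
      · have he : (fun i : Fin n => ν (m + i)) = (fun i : Fin n => kMinus β α (m + i)) := by
          funext i
          exact hagree (m + i) (by have := i.isLt; omega)
        rw [he]
        exact hkF m n
      · intro hmem
        have hlen := Finset.le_sup (f := List.length) hmem
        rw [List.length_ofFn] at hlen
        omega
  have hνmem : ν ∈ OmegaSet β α := by rw [hF]; exact hνF
  have hsig : (fun k => ν (k + (L + 2))) = tauNeg β α ((Tneg β α)^[L] s) := by
    funext k
    simp only [hν]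
    rw [if_neg (by omega : ¬ (k + (L + 2) < 2))]
    show tauNeg β α s (k + (L + 2) - 2) = tauNeg β α ((Tneg β α)^[L] s) k
    simp only [tauNeg]
    rw [show k + (L + 2) - 2 = k + L by omega, Function.iterate_add_apply]
  have hsigk : (fun k => kMinus β α (k + (L + 2))) = tauNeg β α ((Tneg β α)^[L + 1] 1) := by
    funext k
    simp only [kMinus, tauNeg]
    have hit : (Tneg β α)^[k + (L + 2)] ((1 - α) / β)
        = (Tneg β α)^[k] ((Tneg β α)^[L + 1] 1) := by
      rw [show k + (L + 2) = (k + (L + 1)) + 1 by omega, Function.iterate_succ_apply, Tneg_c,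
        Function.iterate_add_apply]
    rw [hit]
  have hmem1 : (Tneg β α)^[L + 1] 1 ∈ Set.Icc (0:ℝ) 1 :=
    Tneg_iter_mem hβ1 hβ2 hα0 hα1 (by constructor <;> norm_num) (L + 1)
  have hdiff := piF_prefix_diff hβ1 hα0 hα1' (L + 2) ν (kMinus β α) hagree
  rw [hsig, hsigk, pi_tauNeg hβ1 hβ2 hα0 hα1 hmemL, pi_tauNeg hβ1 hβ2 hα0 hα1 hmem1] at hdiff
  have hkc : piF β α (kMinus β α) = (1 - α) / β := pi_tauNeg hβ1 hβ2 hα0 hα1 hcIcc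
  have hνgt : (1 - α) / β < piF β α ν := by
    have hpow : (0:ℝ) < (β⁻¹) ^ (L + 2) := by positivity
    have hneg : 0 < (Tneg β α)^[L] s - (Tneg β α)^[L + 1] 1 := by linarith
    nlinarith [hdiff, hkc]
  have hν0 : ν 0 = false := by
    simp only [hν]
    rw [if_pos (by norm_num : (0:ℕ) < 2)]
    simp only [kMinus, tauNeg, Function.iterate_zero_apply]
    simp
  obtain hcase | hcase := hνmem
  · obtain ⟨z, hz, hze⟩ := hcase
    have hpz : piF β α ν = z := by rw [← hze]; exact pi_tauPos hβ1 hβ2 hα0 hα1 hz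
    have hd : tauPos β α z 0 = false := by rw [hze]; exact hν0
    simp only [tauPos, Function.iterate_zero_apply] at hd
    by_cases h : z < (1 - α) / β
    · linarith
    · simp [h] at hd
  · obtain ⟨z, hz, hze⟩ := hcase
    have hpz : piF β α ν = z := by rw [← hze]; exact pi_tauNeg hβ1 hβ2 hα0 hα1 hz
    have hd : tauNeg β α z 0 = false := by rw [hze]; exact hν0
    simp only [tauNeg, Function.iterate_zero_apply] at hd
    by_cases h : z ≤ (1 - α) / β
    · linarith
    · simp [h] at hd

end SFTAux


theorem sft_implies_matching (β α : ℝ)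
    (hβ : β ∈ Set.Ioo (1 : ℝ) 2) (hα : α ∈ Set.Ioo (0 : ℝ) (2 - β))
    (hSFT : IsSFT (OmegaSet β α)) : HasMatching β α := by
  obtain ⟨hβ1, hβ2⟩ := hβ
  obtain ⟨hα0, hα1⟩ := hα
  obtain ⟨m, hm⟩ := SFTAux.hits_c_pos hβ1 hβ2 hα0 hα1 hSFT
  obtain ⟨l, hl⟩ := SFTAux.hits_c_neg hβ1 hβ2 hα0 hα1 hSFT
  refine ⟨m + l * (m + 1), ?_⟩
  have hfixp : (Tpos β α)^[m + 1] ((1 - α) / β) = (1 - α) / β := by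
    rw [Function.iterate_succ_apply, SFTAux.Tpos_c, hm]
  have hfixn : (Tneg β α)^[l + 1] ((1 - α) / β) = (1 - α) / β := by
    rw [Function.iterate_succ_apply, SFTAux.Tneg_c, hl]
  have hp : (Tpos β α)^[m + l * (m + 1)] 0 = (1 - α) / β := by
    have h1 : (Tpos β α)^[m + l * (m + 1) + 1] ((1 - α) / β) = (1 - α) / β := by
      rw [show m + l * (m + 1) + 1 = (m + 1) * (l + 1) by ring, Function.iterate_mul]
      exact Function.iterate_fixed hfixp (l + 1)
    rw [← h1, Function.iterate_succ_apply, SFTAux.Tpos_c]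
  have hn : (Tneg β α)^[m + l * (m + 1)] 1 = (1 - α) / β := by
    have h1 : (Tneg β α)^[m + l * (m + 1) + 1] ((1 - α) / β) = (1 - α) / β := by
      rw [show m + l * (m + 1) + 1 = (l + 1) * (m + 1) by ring, Function.iterate_mul]
      exact Function.iterate_fixed hfixn (m + 1)
    rw [← h1, Function.iterate_succ_apply, SFTAux.Tneg_c]
  rw [hp, hn]
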